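/- Let W, W_1, ..., W_m (m ≥ 3) be i.i.d. nonnegative random variables with density f_W and CDF F_W satisfying f_W(t) ≤ c_0 F_W(t)^κ for all t ≥ 0, with c_0 > 0 and κ ≥ 0. Let W_(1) ≤ W_(2) be the two smallest order statistics. Then for any δ ∈ (0,1), with probability at least 1-δ, W_(2) - W_(1) > δ m^{κ-1} / C, where C = c_0 Γ(κ+1) 3^{κ+1}. -/

import Mathlib

open MeasureTheory ProbabilityTheory Set Filter Topology
open scoped ENNReal NNReal

lemma cdf_map_uniform (ν : Measure ℝ) [IsProbabilityMeasure ν]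
    (hno : ∀ y : ℝ, ν {y} = 0) (F : ℝ → ℝ) (hF : ∀ y, F y = (ν (Iic y)).toReal) :
    Measure.map F ν = volume.restrict (Icc (0:ℝ) 1) := by
  have hIic : ∀ y, ν (Iic y) = ENNReal.ofReal (F y) := fun y => by
    rw [hF y, ENNReal.ofReal_toReal (measure_ne_top ν _)]
  have hF0 : ∀ y, 0 ≤ F y := fun y => by rw [hF y]; exact ENNReal.toReal_nonneg
  have hF1 : ∀ y, F y ≤ 1 := fun y => by
    rw [hF y]
    exact ENNReal.toReal_le_of_le_ofReal zero_le_one (by simpa using prob_le_one (μ := ν))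
  have hFmono : Monotone F := fun a b hab => by
    rw [hF a, hF b]
    exact ENNReal.toReal_mono (measure_ne_top _ _) (measure_mono (Iic_subset_Iic.mpr hab))
  have hFmeas : Measurable F := hFmono.measurable
  have hIio : ∀ y, ν (Iio y) = ν (Iic y) := fun y => by
    rw [← Iio_union_right, measure_union (by simp) (measurableSet_singleton y), hno y, add_zero]
  have key : ∀ c b : ℝ, (∀ y, c < y → b < F y) → ENNReal.ofReal b ≤ ν (Iic c) := by
    intro c b hb
    have hanti : Antitone (fun nn : ℕ => Iic (c + 1/(nn+1))) := by
      intro a b hab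
      refine Iic_subset_Iic.mpr ?_
      have : (1:ℝ)/(b+1) ≤ 1/(a+1) := by
        apply one_div_le_one_div_of_le (by positivity)
        exact_mod_cast by omega
      linarith
    have hseq := tendsto_measure_iInter_atTop (μ := ν)
      (fun nn => measurableSet_Iic.nullMeasurableSet) hanti ⟨0, measure_ne_top _ _⟩
    have hint : (⋂ nn : ℕ, Iic (c + 1/(nn+1))) = Iic c := by
      ext x
      simp only [mem_iInter, mem_Iic]
      constructor
      · intro h
        by_contra hx
        push_neg at hx
        obtain ⟨nn, hnn⟩ := exists_nat_one_div_lt (sub_pos.mpr hx)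
        have := h nn
        linarith
      · intro h nn
        have : (0:ℝ) < 1/((nn:ℝ)+1) := by positivity
        linarith
    rw [hint] at hseq
    refine ge_of_tendsto hseq (Eventually.of_forall fun nn => ?_)
    have hpos : (0:ℝ) < 1/((nn:ℝ)+1) := by positivity
    have hlt : b < F (c + 1/(nn+1)) := hb _ (by linarith)
    show ENNReal.ofReal b ≤ ν (Iic (c + 1/(nn+1)))
    rw [hIic]
    exact ENNReal.ofReal_le_ofReal hlt.le
  haveI : IsProbabilityMeasure (Measure.map F ν) :=
    Measure.isProbabilityMeasure_map hFmeas.aemeasurable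
  refine Measure.ext_of_Iic (Measure.map F ν) _ (fun b => ?_)
  rw [Measure.map_apply hFmeas measurableSet_Iic, Measure.restrict_apply measurableSet_Iic]
  rcases lt_or_ge b 0 with hb | hb
  · have h1 : F ⁻¹' Iic b = ∅ := by
      ext y; simp only [mem_preimage, mem_Iic, mem_empty_iff_false, iff_false, not_le]
      exact lt_of_lt_of_le hb (hF0 y)
    have h2 : Iic b ∩ Icc (0:ℝ) 1 = ∅ := by
      ext x; simp only [mem_inter_iff, mem_Iic, mem_Icc, mem_empty_iff_false, iff_false]
      rintro ⟨h1', h2', _⟩; linarith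
    rw [h1, h2]; simp
  rcases le_or_gt 1 b with hb1 | hb1
  · have h1 : F ⁻¹' Iic b = univ := by
      ext y; simp only [mem_preimage, mem_Iic, mem_univ, iff_true]
      exact le_trans (hF1 y) hb1
    have h2 : Iic b ∩ Icc (0:ℝ) 1 = Icc 0 1 := by
      rw [inter_eq_self_of_subset_right]
      intro x hx; exact le_trans hx.2 hb1
    rw [h1, h2, measure_univ, Real.volume_Icc]
    norm_num
  · -- main case : 0 ≤ b < 1
    have h2 : Iic b ∩ Icc (0:ℝ) 1 = Icc 0 b := by
      ext x; simp only [mem_inter_iff, mem_Iic, mem_Icc]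
      constructor
      · rintro ⟨h1', h2', _⟩; exact ⟨h2', h1'⟩
      · rintro ⟨h1', h2'⟩; exact ⟨h2', h1', le_trans h2' (le_of_lt hb1)⟩
    rw [h2, Real.volume_Icc]
    have hvol : ENNReal.ofReal (b - 0) = ENNReal.ofReal b := by norm_num
    rw [hvol]
    set A := F ⁻¹' Iic b with hA
    have hmemA : ∀ x, x ∈ A ↔ F x ≤ b := fun x => Iff.rfl
    have hlower : ∀ ⦃x y⦄, x ≤ y → y ∈ A → x ∈ A := fun x y hxy hy =>
      le_trans (hFmono hxy) hy
    rcases eq_empty_or_nonempty A with hAe | hAne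
    · -- empty : then b must be 0? we show ν A = 0 and ofReal b = 0 needs b ≤ 0.
      have hml := tendsto_measure_iInter_atBot (μ := ν)
        (fun (x:ℝ) => measurableSet_Iic.nullMeasurableSet) (fun x y hxy => Iic_subset_Iic.mpr hxy)
        ⟨0, measure_ne_top _ _⟩
      have hint : (⋂ x : ℝ, Iic x) = ∅ := by
        ext z; simp only [mem_iInter, mem_Iic, mem_empty_iff_false, iff_false, not_forall, not_le]
        exact ⟨z - 1, by linarith⟩
      rw [hint, measure_empty] at hml
      have hb0 : b ≤ 0 := by
        by_contra hb0
        push_neg at hb0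
        have : ∀ᶠ x : ℝ in atBot, (ν ∘ Iic) x < ENNReal.ofReal b :=
          hml.eventually_lt_const (by simp [hb0])
        obtain ⟨y0, hy0⟩ := this.exists
        have hy0' : ν (Iic y0) < ENNReal.ofReal b := hy0
        rw [hIic y0] at hy0'
        have h' : F y0 < b := (ENNReal.ofReal_lt_ofReal_iff_of_nonneg (hF0 y0)).mp hy0'
        have : y0 ∈ A := h'.le
        rw [hAe] at this
        exact this
      have hbeq : b = 0 := le_antisymm hb0 hb
      rw [hAe, hbeq]; simp
    · have hbdd : BddAbove A := by
        have htop := tendsto_measure_Iic_atTop (μ := ν)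
        rw [measure_univ] at htop
        have hev : ∀ᶠ x : ℝ in atTop, ENNReal.ofReal b < ν (Iic x) :=
          htop.eventually_const_lt (ENNReal.ofReal_lt_one.mpr hb1)
        obtain ⟨y0, hy0⟩ := hev.exists
        refine ⟨y0, fun x hx => ?_⟩
        by_contra hxy
        push_neg at hxy
        have hle : ν (Iic x) ≤ ENNReal.ofReal b := by
          rw [hIic]; exact ENNReal.ofReal_le_ofReal hx
        exact absurd (lt_of_lt_of_le hy0 (measure_mono (Iic_subset_Iic.mpr hxy.le)))
          (not_lt.mpr hle)
      set c := sSup A with hc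
      have hAbove : ∀ y, c < y → b < F y := by
        intro y hy
        by_contra hby
        push_neg at hby
        exact absurd (le_csSup hbdd (hby : y ∈ A)) (not_le.mpr hy)
      have hgec : ENNReal.ofReal b ≤ ν (Iic c) := key c b hAbove
      by_cases hcA : c ∈ A
      · have hAIic : A = Iic c := by
          apply Subset.antisymm
          · exact fun x hx => le_csSup hbdd hx
          · exact fun x hx => hlower hx hcA
        rw [hAIic]
        refine le_antisymm ?_ hgec
        rw [hIic]
        exact ENNReal.ofReal_le_ofReal hcA
      · have hAIio : A = Iio c := by
          apply Subset.antisymm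
          · intro x hx
            exact lt_of_le_of_ne (le_csSup hbdd hx) (fun h => hcA (by rwa [h] at hx))
          · intro x hx
            obtain ⟨y, hyA, hxy⟩ := exists_lt_of_lt_csSup hAne hx
            exact hlower hxy.le hyA
        rw [hAIio, hIio]
        refine le_antisymm ?_ hgec
        -- ν (Iic c) = ν (Iio c) ≤ ofReal b : approximate Iio c from below within A
        rw [← hIio]
        obtain ⟨u, hu_mono, hu_tend, hu_mem⟩ := exists_seq_tendsto_sSup hAne hbdd
        have hiun : (⋃ nn, Iic (u nn)) = Iio c := by
          ext x
          simp only [mem_iUnion, mem_Iic, mem_Iio]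
          constructor
          · rintro ⟨nn, hnn⟩
            have : u nn ∈ Iio c := hAIio ▸ hu_mem nn
            exact lt_of_le_of_lt hnn this
          · intro hx
            have hx' : x ∈ A := hAIio ▸ (hx : x ∈ Iio c)
            obtain ⟨nn, hnn⟩ := (hu_tend.eventually_const_lt hx).exists
            exact ⟨nn, hnn.le⟩
        rw [← hiun]
        have hmon : Monotone (fun nn => Iic (u nn)) := fun a b hab => Iic_subset_Iic.mpr (hu_mono hab)
        have htend := tendsto_measure_iUnion_atTop (μ := ν) hmon
        refine le_of_tendsto htend (Eventually.of_forall fun nn => ?_)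
        show ν (Iic (u nn)) ≤ ENNReal.ofReal b
        rw [hIic]
        exact ENNReal.ofReal_le_ofReal (hu_mem nn)

lemma joint_law {Ω : Type*} [MeasurableSpace Ω] (μ : Measure Ω) [IsProbabilityMeasure μ]
    {m : ℕ} (W : Fin m → Ω → ℝ) (hmeas : ∀ i, Measurable (W i))
    (hindep : iIndepFun W μ)
    (ν : Measure ℝ) [IsProbabilityMeasure ν] (hident : ∀ i, Measure.map (W i) μ = ν) :
    Measure.map (fun ω k => W k ω) μ = Measure.pi (fun _ : Fin m => ν) := by
  refine (Measure.pi_eq fun s hs => ?_).symm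
  rw [Measure.map_apply (measurable_pi_lambda _ hmeas) (MeasurableSet.univ_pi hs)]
  have hpre : (fun ω k => W k ω) ⁻¹' (univ.pi s) = ⋂ k, W k ⁻¹' s k := by
    ext ω; simp [Set.mem_univ_pi]
  rw [hpre, hindep.meas_iInter (fun k => ⟨s k, hs k, rfl⟩)]
  refine Finset.prod_congr rfl fun k _ => ?_
  rw [← hident k, Measure.map_apply (hmeas k) (hs k)]

lemma pair_bound (ν : Measure ℝ) [IsProbabilityMeasure ν] {n : ℕ} (i j : Fin (n+1))
    (hij : i ≠ j) (t : ℝ) :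
    Measure.pi (fun _ : Fin (n+1) => ν)
      {x | x i ≤ x j ∧ x j ≤ x i + t ∧ ∀ k, k ≠ i → k ≠ j → x j ≤ x k}
      = ∫⁻ y, ν (Icc (y - t) y) * ν (Ici y) ^ (n - 1) ∂ν := by
  classical
  obtain ⟨i', hi'⟩ := Fin.exists_succAbove_eq hij
  set BX : Set (Fin (n+1) → ℝ) :=
    {x | x i ≤ x j ∧ x j ≤ x i + t ∧ ∀ k, k ≠ i → k ≠ j → x j ≤ x k} with hBXdef
  have hBX : MeasurableSet BX := by
    apply MeasurableSet.inter
    · exact measurableSet_le (measurable_pi_apply i) (measurable_pi_apply j)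
    apply MeasurableSet.inter
    · exact measurableSet_le (measurable_pi_apply j) (by fun_prop)
    · show MeasurableSet {x : Fin (n+1) → ℝ | ∀ k, k ≠ i → k ≠ j → x j ≤ x k}
      rw [Set.setOf_forall]
      refine MeasurableSet.iInter fun k => ?_
      rcases eq_or_ne k i with rfl | hki
      · simp
      rcases eq_or_ne k j with rfl | hkj
      · simp
      have : {x : Fin (n+1) → ℝ | k ≠ i → k ≠ j → x j ≤ x k}
          = {x | x j ≤ x k} := by
        ext x; simp [hki, hkj]
      rw [this]
      exact measurableSet_le (measurable_pi_apply j) (measurable_pi_apply k)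
  set e := MeasurableEquiv.piFinSuccAbove (fun _ : Fin (n+1) => ℝ) j with he
  have hmp := measurePreserving_piFinSuccAbove (fun _ : Fin (n+1) => ν) j
  set S : Set (ℝ × (Fin n → ℝ)) := e.symm ⁻¹' BX with hS
  have hSm : MeasurableSet S := e.symm.measurable hBX
  have hBXe : BX = e ⁻¹' S := by
    rw [hS, ← Set.preimage_comp, MeasurableEquiv.symm_comp_self, Set.preimage_id]
  rw [hBXe, hmp.measure_preimage hSm.nullMeasurableSet,
    Measure.prod_apply hSm]
  refine lintegral_congr fun y => ?_
  have hsec : (Prod.mk y ⁻¹' S)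
      = univ.pi (fun q : Fin n => if q = i' then Icc (y - t) y else Ici y) := by
    ext z
    have hx0 : e.symm (y, z) = j.insertNth y z := by
      simp [he, MeasurableEquiv.piFinSuccAbove_symm_apply, Fin.insertNthEquiv]
    set xx : Fin (n+1) → ℝ := j.insertNth y z with hxx
    have hxj : xx j = y := Fin.insertNth_apply_same (α := fun _ => ℝ) j y z
    have hxq : ∀ q : Fin n, xx (j.succAbove q) = z q := fun q =>
      Fin.insertNth_apply_succAbove (α := fun _ => ℝ) j y z q
    have hstep : z ∈ Prod.mk y ⁻¹' S ↔ xx ∈ BX := by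
      rw [Set.mem_preimage, hS, Set.mem_preimage, hx0]
    rw [hstep]
    simp only [Set.mem_univ_pi]
    have hBXiff : xx ∈ BX ↔ xx i ≤ xx j ∧ xx j ≤ xx i + t ∧
        ∀ k, k ≠ i → k ≠ j → xx j ≤ xx k := Iff.rfl
    rw [hBXiff]
    have hxi : xx i = z i' := by rw [← hi', hxq]
    constructor
    · intro hz q
      by_cases hq : q = i'
      · subst hq
        rw [if_pos rfl]
        have h1' := hz.1
        have h2' := hz.2.1
        rw [hxi, hxj] at h1' h2'
        exact ⟨by linarith, h1'⟩
      · rw [if_neg hq]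
        have hkne_i : j.succAbove q ≠ i := by
          rw [← hi']
          exact fun h => hq (Fin.succAbove_right_injective h)
        have hkne_j : j.succAbove q ≠ j := Fin.succAbove_ne j q
        have := hz.2.2 _ hkne_i hkne_j
        rwa [hxj, hxq] at this
    · intro hz
      have hzi := hz i'
      rw [if_pos rfl] at hzi
      refine ⟨by rw [hxi, hxj]; exact hzi.2, by rw [hxi, hxj]; linarith [hzi.1], ?_⟩
      intro k hki hkj
      obtain ⟨q, hq⟩ := Fin.exists_succAbove_eq hkj
      have hq' : q ≠ i' := fun h => hki (by rw [← hq, h, hi'])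
      have := hz q
      rw [if_neg hq'] at this
      rw [hxj, ← hq, hxq]
      exact this
  rw [hsec, Measure.pi_pi]
  rw [← Finset.mul_prod_erase Finset.univ _ (Finset.mem_univ i'), if_pos rfl]
  congr 1
  rw [Finset.prod_congr rfl (fun q hq => by
    rw [if_neg (Finset.ne_of_mem_erase hq)]), Finset.prod_const,
    Finset.card_erase_of_mem (Finset.mem_univ i'), Finset.card_univ, Fintype.card_fin]

lemma BX_meas {m : ℕ} (i j : Fin m) (t : ℝ) :
    MeasurableSet {x : Fin m → ℝ | x i ≤ x j ∧ x j ≤ x i + t ∧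
      ∀ k, k ≠ i → k ≠ j → x j ≤ x k} := by
  apply MeasurableSet.inter
  · exact measurableSet_le (measurable_pi_apply i) (measurable_pi_apply j)
  apply MeasurableSet.inter
  · exact measurableSet_le (measurable_pi_apply j) (by fun_prop)
  · show MeasurableSet {x : Fin m → ℝ | ∀ k, k ≠ i → k ≠ j → x j ≤ x k}
    rw [Set.setOf_forall]
    refine MeasurableSet.iInter fun k => ?_
    rcases eq_or_ne k i with rfl | hki
    · simp
    rcases eq_or_ne k j with rfl | hkj
    · simp
    have : {x : Fin m → ℝ | k ≠ i → k ≠ j → x j ≤ x k} = {x | x j ≤ x k} := by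
      ext x; simp [hki, hkj]
    rw [this]
    exact measurableSet_le (measurable_pi_apply j) (measurable_pi_apply k)

/-- Minimal spacing of i.i.d. nonnegative random variables whose density f satisfies
f ≤ c₀ F^κ: for any δ ∈ (0,1), with probability at least 1-δ, the gap between the two
smallest order statistics exceeds δ m^{κ-1}/C, with C = c₀ Γ(κ+1) 3^{κ+1}. The event
`W₍₂₎ - W₍₁₎ > t` is expressed as: some `W k` is smaller than all other `W j` by more
than `t`. -/
theorem stmt_6 {Ω : Type*} [MeasurableSpace Ω] (μ : Measure Ω) [IsProbabilityMeasure μ]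
    (m : ℕ) (hm : 3 ≤ m) (W : Fin m → Ω → ℝ) (W₀ : Ω → ℝ)
    (f F : ℝ → ℝ) (c₀ κ : ℝ) (hc₀ : 0 < c₀) (hκ : 0 ≤ κ)
    (hmeas : ∀ i, Measurable (W i)) (hmeas₀ : Measurable W₀) (hf : Measurable f)
    (hnonneg : ∀ i ω, 0 ≤ W i ω)
    (hindep : iIndepFun W μ)
    (hident : ∀ i, Measure.map (W i) μ = Measure.map W₀ μ)
    (hdensity : Measure.map W₀ μ = volume.withDensity (fun t => ENNReal.ofReal (f t)))
    (hcdf : ∀ t, F t = (μ {ω | W₀ ω ≤ t}).toReal)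
    (hdom : ∀ t, 0 ≤ t → f t ≤ c₀ * (F t) ^ κ)
    (δ : ℝ) (hδ : δ ∈ Set.Ioo (0 : ℝ) 1) :
    ENNReal.ofReal (1 - δ) ≤
      μ {ω | ∃ k, ∀ j, j ≠ k →
        W k ω + δ * (m : ℝ) ^ (κ - 1) / (c₀ * Real.Gamma (κ + 1) * 3 ^ (κ + 1)) < W j ω} := by
  classical
  obtain ⟨hδ0, hδ1⟩ := hδ
  have hGpos : 0 < Real.Gamma (κ + 1) := Real.Gamma_pos_of_pos (by linarith)
  have hApos : (0:ℝ) < (3:ℝ) ^ (κ + 1) := Real.rpow_pos_of_pos (by norm_num) _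
  have hmpos : (0:ℝ) < (m:ℝ) := by
    have h : 0 < m := by omega
    exact_mod_cast h
  set t : ℝ := δ * (m : ℝ) ^ (κ - 1) / (c₀ * Real.Gamma (κ + 1) * 3 ^ (κ + 1)) with ht
  have htpos : 0 < t := by
    apply div_pos
    · exact mul_pos hδ0 (Real.rpow_pos_of_pos hmpos _)
    · positivity
  set ν : Measure ℝ := Measure.map W₀ μ with hν
  haveI : IsProbabilityMeasure ν := Measure.isProbabilityMeasure_map hmeas₀.aemeasurable
  have hF : ∀ y, F y = (ν (Iic y)).toReal := fun y => by
    rw [hcdf y, hν, Measure.map_apply hmeas₀ measurableSet_Iic]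
    rfl
  have hIic : ∀ y, ν (Iic y) = ENNReal.ofReal (F y) := fun y => by
    rw [hF y, ENNReal.ofReal_toReal (measure_ne_top ν _)]
  have hF0 : ∀ y, 0 ≤ F y := fun y => by rw [hF y]; exact ENNReal.toReal_nonneg
  have hF1 : ∀ y, F y ≤ 1 := fun y => by
    rw [hF y]
    exact ENNReal.toReal_le_of_le_ofReal zero_le_one (by simpa using prob_le_one (μ := ν))
  have hFmono : Monotone F := fun a b hab => by
    rw [hF a, hF b]
    exact ENNReal.toReal_mono (measure_ne_top _ _) (measure_mono (Iic_subset_Iic.mpr hab))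
  have hFmeas : Measurable F := hFmono.measurable
  have hno : ∀ y : ℝ, ν {y} = 0 := fun y => by
    rw [hdensity, withDensity_apply _ (measurableSet_singleton y)]
    exact setLIntegral_measure_zero _ _ (measure_singleton y)
  have hIio : ∀ y, ν (Iio y) = ν (Iic y) := fun y => by
    rw [← Iio_union_right, measure_union (by simp) (measurableSet_singleton y), hno y, add_zero]
  have hsupp : ν (Iio 0) = 0 := by
    have h0 : ν = Measure.map (W ⟨0, by omega⟩) μ := (hident _).symm
    rw [h0, Measure.map_apply (hmeas _) measurableSet_Iio]
    have : (W ⟨0, by omega⟩) ⁻¹' (Iio 0) = ∅ := by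
      ext ω; simp only [mem_preimage, mem_Iio, mem_empty_iff_false, iff_false, not_lt]
      exact hnonneg _ ω
    rw [this, measure_empty]
  -- pointwise bounds
  have hIcc : ∀ y, ν (Icc (y - t) y) ≤ ENNReal.ofReal (c₀ * t) * ENNReal.ofReal (F y ^ κ) := by
    intro y
    have hsplit : ν (Icc (y - t) y) ≤ ν (Icc (y - t) y ∩ Ici 0) + ν (Icc (y - t) y ∩ Iio 0) := by
      conv_lhs => rw [← Set.inter_union_compl (Icc (y - t) y) (Ici 0)]
      rw [Set.compl_Ici]
      exact measure_union_le _ _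
    have h2 : ν (Icc (y - t) y ∩ Iio 0) = 0 :=
      measure_mono_null inter_subset_right hsupp
    have hEm : MeasurableSet (Icc (y - t) y ∩ Ici (0:ℝ)) :=
      measurableSet_Icc.inter measurableSet_Ici
    have hE : ν (Icc (y - t) y ∩ Ici 0) ≤ ENNReal.ofReal (c₀ * t) * ENNReal.ofReal (F y ^ κ) := by
      rw [hdensity, withDensity_apply _ hEm]
      calc ∫⁻ s in Icc (y - t) y ∩ Ici 0, ENNReal.ofReal (f s)
          ≤ ∫⁻ _ in Icc (y - t) y ∩ Ici 0, ENNReal.ofReal (c₀ * F y ^ κ) := by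
            refine setLIntegral_mono measurable_const fun s hs => ?_
            refine ENNReal.ofReal_le_ofReal ?_
            refine le_trans (hdom s hs.2) ?_
            exact mul_le_mul_of_nonneg_left
              (Real.rpow_le_rpow (hF0 s) (hFmono hs.1.2) hκ) hc₀.le
        _ = ENNReal.ofReal (c₀ * F y ^ κ) * volume (Icc (y - t) y ∩ Ici 0) :=
            setLIntegral_const _ _
        _ ≤ ENNReal.ofReal (c₀ * F y ^ κ) * ENNReal.ofReal t := by
            refine mul_le_mul' le_rfl ?_
            refine le_trans (measure_mono inter_subset_left) ?_
            rw [Real.volume_Icc]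
            exact ENNReal.ofReal_le_ofReal (by linarith)
        _ = ENNReal.ofReal (c₀ * t) * ENNReal.ofReal (F y ^ κ) := by
            rw [ENNReal.ofReal_mul hc₀.le, ENNReal.ofReal_mul hc₀.le]
            ring
    calc ν (Icc (y - t) y) ≤ _ := hsplit
      _ = ν (Icc (y - t) y ∩ Ici 0) := by rw [h2, add_zero]
      _ ≤ _ := hE
  have hIci : ∀ y, ν (Ici y) = ENNReal.ofReal (1 - F y) := fun y => by
    rw [← Set.compl_Iio, measure_compl measurableSet_Iio (measure_ne_top _ _), measure_univ,
      hIio, hIic, ← ENNReal.ofReal_one, ← ENNReal.ofReal_sub _ (hF0 y)]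
  -- reindex m = n + 1
  obtain ⟨n, rfl⟩ : ∃ n, m = n + 1 := ⟨m - 1, by omega⟩
  have hn2 : 2 ≤ n := by omega
  -- the key integral bound
  set p : ℕ := n - 1 with hp
  have hpn : (p:ℝ) = (n:ℝ) - 1 := by
    rw [hp, Nat.cast_sub (by omega)]; norm_num
  have hppos : (0:ℝ) < (p:ℝ) := by
    rw [hpn]
    have : (2:ℝ) ≤ n := by exact_mod_cast hn2
    linarith
  set K : ℝ≥0∞ := ENNReal.ofReal (c₀ * t) *
    ENNReal.ofReal ((1 / (p:ℝ)) ^ (κ + 1) * Real.Gamma (κ + 1)) with hK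
  have hpair : ∀ i j : Fin (n+1), i ≠ j →
      μ {ω | W i ω ≤ W j ω ∧ W j ω ≤ W i ω + t ∧
        ∀ k, k ≠ i → k ≠ j → W j ω ≤ W k ω} ≤ K := by
    intro i j hij
    have hTmeas : Measurable (fun ω (k : Fin (n+1)) => W k ω) :=
      measurable_pi_lambda _ hmeas
    have hjoint := joint_law μ W hmeas hindep ν hident
    have hpre : {ω | W i ω ≤ W j ω ∧ W j ω ≤ W i ω + t ∧
        ∀ k, k ≠ i → k ≠ j → W j ω ≤ W k ω}
        = (fun ω (k : Fin (n+1)) => W k ω) ⁻¹'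
          {x | x i ≤ x j ∧ x j ≤ x i + t ∧ ∀ k, k ≠ i → k ≠ j → x j ≤ x k} := rfl
    rw [hpre, ← Measure.map_apply hTmeas (BX_meas i j t), hjoint, pair_bound ν i j hij t]
    -- now the integral bound
    have hg : Measurable fun v : ℝ => ENNReal.ofReal (v ^ κ) * ENNReal.ofReal (1 - v) ^ p := by
      fun_prop
    calc ∫⁻ y, ν (Icc (y - t) y) * ν (Ici y) ^ (n - 1) ∂ν
        ≤ ∫⁻ y, ENNReal.ofReal (c₀ * t) *
            (ENNReal.ofReal (F y ^ κ) * ENNReal.ofReal (1 - F y) ^ p) ∂ν := by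
          refine lintegral_mono fun y => ?_
          rw [hIci y]
          calc ν (Icc (y - t) y) * ENNReal.ofReal (1 - F y) ^ (n-1)
              ≤ (ENNReal.ofReal (c₀ * t) * ENNReal.ofReal (F y ^ κ)) *
                ENNReal.ofReal (1 - F y) ^ p := by
                exact mul_le_mul' (hIcc y) le_rfl
            _ = _ := by ring
      _ = ENNReal.ofReal (c₀ * t) *
            ∫⁻ y, ENNReal.ofReal (F y ^ κ) * ENNReal.ofReal (1 - F y) ^ p ∂ν :=
          lintegral_const_mul' _ _ ENNReal.ofReal_ne_top
      _ = ENNReal.ofReal (c₀ * t) *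
            ∫⁻ v in Icc (0:ℝ) 1, ENNReal.ofReal (v ^ κ) * ENNReal.ofReal (1 - v) ^ p := by
          congr 1
          have := lintegral_map (μ := ν)
            (f := fun v : ℝ => ENNReal.ofReal (v ^ κ) * ENNReal.ofReal (1 - v) ^ p)
            (g := F) hg hFmeas
          rw [← this, cdf_map_uniform ν hno F hF]
      _ ≤ K := by
          rw [hK]
          refine mul_le_mul' le_rfl ?_
          set a : ℝ := (p:ℝ) with hadef
          have h1 : ∀ v ∈ Icc (0:ℝ) 1,
              ENNReal.ofReal (v ^ κ) * ENNReal.ofReal (1 - v) ^ p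
                ≤ ENNReal.ofReal (v ^ κ * Real.exp (-(a * v))) := by
            intro v hv
            have hv0 := hv.1
            have hexp : (1 - v) ≤ Real.exp (-v) := by
              have := Real.add_one_le_exp (-v); linarith
            calc ENNReal.ofReal (v ^ κ) * ENNReal.ofReal (1 - v) ^ p
                ≤ ENNReal.ofReal (v ^ κ) * ENNReal.ofReal (Real.exp (-v)) ^ p := by
                  exact mul_le_mul' le_rfl (pow_le_pow_left' (ENNReal.ofReal_le_ofReal hexp) p)
              _ = ENNReal.ofReal (v ^ κ * Real.exp (-v) ^ p) := by
                  rw [ENNReal.ofReal_mul (Real.rpow_nonneg hv0 κ),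
                    ENNReal.ofReal_pow (Real.exp_nonneg _)]
              _ = ENNReal.ofReal (v ^ κ * Real.exp (-(a * v))) := by
                  rw [← Real.exp_nat_mul]
                  congr 2
                  rw [hadef]; ring
          have h2 : ∫⁻ v in Icc (0:ℝ) 1, ENNReal.ofReal (v ^ κ) * ENNReal.ofReal (1 - v) ^ p
              ≤ ∫⁻ v in Icc (0:ℝ) 1, ENNReal.ofReal (v ^ κ * Real.exp (-(a * v))) :=
            setLIntegral_mono (by fun_prop) h1
          have h3 : ∫⁻ v in Icc (0:ℝ) 1, ENNReal.ofReal (v ^ κ * Real.exp (-(a * v)))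
              ≤ ∫⁻ v in Ioi (0:ℝ), ENNReal.ofReal (v ^ κ * Real.exp (-(a * v))) := by
            have hle : volume.restrict (Icc (0:ℝ) 1) ≤ volume.restrict (Ici (0:ℝ)) :=
              Measure.restrict_mono Icc_subset_Ici_self le_rfl
            have heq : volume.restrict (Ioi (0:ℝ)) = volume.restrict (Ici (0:ℝ)) :=
              Measure.restrict_congr_set Ioi_ae_eq_Ici
            calc ∫⁻ v in Icc (0:ℝ) 1, ENNReal.ofReal (v ^ κ * Real.exp (-(a * v)))
                ≤ ∫⁻ v in Ici (0:ℝ), ENNReal.ofReal (v ^ κ * Real.exp (-(a * v))) :=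
                  lintegral_mono' hle le_rfl
              _ = ∫⁻ v in Ioi (0:ℝ), ENNReal.ofReal (v ^ κ * Real.exp (-(a * v))) := by
                  rw [heq]
          have hInt : IntegrableOn (fun v : ℝ => v ^ κ * Real.exp (-(a * v))) (Ioi 0) := by
            have := integrableOn_rpow_mul_exp_neg_mul_rpow (s := κ) (p := 1) (b := a)
              (by linarith) zero_lt_one hppos
            simpa [Real.rpow_one, neg_mul] using this
          have h4 : ∫⁻ v in Ioi (0:ℝ), ENNReal.ofReal (v ^ κ * Real.exp (-(a * v)))
              = ENNReal.ofReal (∫ v in Ioi (0:ℝ), v ^ κ * Real.exp (-(a * v))) := by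
            rw [ofReal_integral_eq_lintegral_ofReal hInt
              ((ae_restrict_iff' measurableSet_Ioi).mpr
                (Eventually.of_forall fun v hv =>
                  mul_nonneg (Real.rpow_nonneg (le_of_lt hv) κ) (Real.exp_nonneg _)))]
          have h5 : (∫ v in Ioi (0:ℝ), v ^ κ * Real.exp (-(a * v)))
              = (1 / a) ^ (κ + 1) * Real.Gamma (κ + 1) := by
            have := Real.integral_rpow_mul_exp_neg_mul_Ioi (a := κ + 1) (r := a)
              (by linarith) hppos
            simpa [add_sub_cancel_right] using this
          exact h2.trans (h3.trans (le_of_eq (h4.trans (by rw [h5]))))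
    -- complement inclusion and union bound
  set S : Set Ω := {ω | ∃ k, ∀ j, j ≠ k → W k ω + t < W j ω} with hSdef
  set Bset : Fin (n+1) × Fin (n+1) → Set Ω := fun q =>
    {ω | W q.1 ω ≤ W q.2 ω ∧ W q.2 ω ≤ W q.1 ω + t ∧
      ∀ k, k ≠ q.1 → k ≠ q.2 → W q.2 ω ≤ W k ω} with hBset
  have hincl : Sᶜ ⊆ ⋃ q ∈ Finset.univ.offDiag (α := Fin (n+1)), Bset q := by
    intro ω hω
    simp only [hSdef, Set.mem_compl_iff, Set.mem_setOf_eq, not_exists] at hω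
    obtain ⟨i, -, hi⟩ := Finset.exists_min_image Finset.univ (fun k => W k ω)
      ⟨⟨0, by omega⟩, Finset.mem_univ _⟩
    have hex := hω i
    push_neg at hex
    obtain ⟨j₀, hj₀ne, hj₀le⟩ := hex
    obtain ⟨j, hjmem, hj⟩ := Finset.exists_min_image (Finset.univ.erase i) (fun k => W k ω)
      ⟨j₀, Finset.mem_erase.mpr ⟨hj₀ne, Finset.mem_univ _⟩⟩
    have hji : j ≠ i := (Finset.mem_erase.mp hjmem).1
    have hqmem : ((i, j) : Fin (n+1) × Fin (n+1)) ∈ Finset.univ.offDiag :=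
      Finset.mem_offDiag.mpr ⟨Finset.mem_univ _, Finset.mem_univ _, hji.symm⟩
    refine Set.mem_biUnion hqmem ?_
    exact ⟨hi j (Finset.mem_univ _),
      le_trans (hj j₀ (Finset.mem_erase.mpr ⟨hj₀ne, Finset.mem_univ _⟩)) hj₀le,
      fun k hki hkj => hj k (Finset.mem_erase.mpr ⟨hki, Finset.mem_univ _⟩)⟩
  have hSc : μ Sᶜ ≤ (((n+1) * (n+1) - (n+1) : ℕ) : ℝ≥0∞) * K := by
    refine le_trans (measure_mono hincl) ?_
    refine le_trans (measure_biUnion_finset_le _ _) ?_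
    have hcard : (Finset.univ.offDiag (α := Fin (n+1))).card = (n+1) * (n+1) - (n+1) := by
      rw [Finset.offDiag_card, Finset.card_univ, Fintype.card_fin]
    calc ∑ q ∈ Finset.univ.offDiag, μ (Bset q) ≤ ∑ _q ∈ Finset.univ.offDiag (α := Fin (n+1)), K := by
          refine Finset.sum_le_sum fun q hq => ?_
          exact hpair q.1 q.2 (Finset.mem_offDiag.mp hq).2.2
      _ = _ := by rw [Finset.sum_const, hcard, nsmul_eq_mul]
  -- final numeric computation
  have hnum : (((n+1) * (n+1) - (n+1) : ℕ) : ℝ≥0∞) * K ≤ ENNReal.ofReal δ := by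
    rw [hK, ← ENNReal.ofReal_mul (by positivity), ← ENNReal.ofReal_natCast,
      ← ENNReal.ofReal_mul (Nat.cast_nonneg _)]
    refine ENNReal.ofReal_le_ofReal ?_
    set M : ℝ := ((n+1 : ℕ) : ℝ) with hM
    have hMpos : (0:ℝ) < M := by rw [hM]; positivity
    have hM3 : (3:ℝ) ≤ M := by
      rw [hM]
      have : (3:ℕ) ≤ n + 1 := by omega
      exact_mod_cast this
    set a : ℝ := (p:ℝ) with hadef
    have hNcast : (((n+1) * (n+1) - (n+1) : ℕ) : ℝ) = M * M - M := by
      rw [hM]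
      push_cast [Nat.cast_sub (by nlinarith : (n+1) ≤ (n+1)*(n+1))]
      ring
    have ha : a = M - 2 := by rw [hpn, hM]; push_cast; ring
    have hapos : 0 < a := hppos
    have h3a : M ≤ 3 * a := by rw [ha]; linarith
    have hQpos : 0 < a ^ (κ + 1) := Real.rpow_pos_of_pos hapos _
    have hkey : (M * M - M) * M ^ (κ - 1) ≤ a ^ (κ + 1) * 3 ^ (κ + 1) := by
      have e1 : M * (M * M ^ (κ - 1)) = M ^ (κ + 1) := by
        rw [show κ + 1 = 1 + (1 + (κ - 1)) by ring, Real.rpow_add hMpos,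
          Real.rpow_add hMpos, Real.rpow_one]
      calc (M * M - M) * M ^ (κ - 1) ≤ (M * M) * M ^ (κ - 1) := by
            have h0 : (0:ℝ) ≤ M ^ (κ - 1) := Real.rpow_nonneg hMpos.le _
            nlinarith
        _ = M ^ (κ + 1) := by rw [← e1]; ring
        _ ≤ (3 * a) ^ (κ + 1) := Real.rpow_le_rpow hMpos.le h3a (by linarith)
        _ = 3 ^ (κ + 1) * a ^ (κ + 1) := Real.mul_rpow (by norm_num) hapos.le
        _ = a ^ (κ + 1) * 3 ^ (κ + 1) := mul_comm _ _
    have h1a : (1 / a) ^ (κ + 1) = 1 / a ^ (κ + 1) := by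
      rw [Real.div_rpow (by norm_num) hapos.le, Real.one_rpow]
    rw [hNcast, h1a, ht]
    have hgoal : (M * M - M) *
        (c₀ * (δ * M ^ (κ - 1) / (c₀ * Real.Gamma (κ + 1) * 3 ^ (κ + 1))) *
          (1 / a ^ (κ + 1) * Real.Gamma (κ + 1)))
        = δ * (((M * M - M) * M ^ (κ - 1)) / (a ^ (κ + 1) * 3 ^ (κ + 1))) := by
      field_simp
    rw [hgoal]
    calc δ * (((M * M - M) * M ^ (κ - 1)) / (a ^ (κ + 1) * 3 ^ (κ + 1)))
        ≤ δ * 1 := by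
          refine mul_le_mul_of_nonneg_left ?_ hδ0.le
          rw [div_le_one (by positivity)]
          exact hkey
      _ = δ := mul_one δ
  have hScδ : μ Sᶜ ≤ ENNReal.ofReal δ := hSc.trans hnum
  have hcompl : (1:ℝ≥0∞) ≤ μ S + μ Sᶜ := by
    rw [← measure_univ (μ := μ), ← Set.union_compl_self S]
    exact measure_union_le _ _
  have hofr : ENNReal.ofReal (1 - δ) = 1 - ENNReal.ofReal δ := by
    rw [ENNReal.ofReal_sub _ hδ0.le, ENNReal.ofReal_one]
  rw [hofr, tsub_le_iff_right]
  exact le_trans hcompl (add_le_add_right hScδ _)
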